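/- Let $\delta$ be a derivation on a C*-algebra $A$ which is the graph limit of inner derivations $\mathrm{ad}(i h_n)$ with $h_n$ self-adjoint. Then $\|x + \lambda \delta(x)\| \geq \|x\|$ for all $x \in D(\delta)$ and all $\lambda \in \mathbb{R}$. -/

import Mathlib

open Filter Complex

section aux

variable {A : Type*} [CStarAlgebra A] [Nontrivial A]

/-- A norm-one unital functional is real on selfadjoint elements. -/
lemma aux_im_eq_zero (φ : A →L[ℂ] ℂ) (h1 : φ 1 = 1) (hn : ‖φ‖ ≤ 1)
    {a : A} (ha : IsSelfAdjoint a) : (φ a).im = 0 := by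
  have key : ∀ t : ℝ, 2 * t * (φ a).im ≤ ‖a‖ ^ 2 - (φ a).re ^ 2 - (φ a).im ^ 2 := by
    intro t
    set b : A := a + ((t : ℂ) * I) • 1 with hb
    have hstar : star ((t : ℂ) * I) = -((t : ℂ) * I) := by
      simp [Complex.ext_iff]
    have hc : ((t : ℂ) * I) * ((t : ℂ) * I) = -((t : ℂ) ^ 2) := by
      rw [mul_mul_mul_comm, Complex.I_mul_I]
      ring
    have hsb : star b * b = a * a + ((t : ℂ) ^ 2) • 1 := by
      have h0 : star b = a - ((t : ℂ) * I) • 1 := by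
        rw [hb, star_add, star_smul, star_one, ha.star_eq, hstar, neg_smul, ← sub_eq_add_neg]
      rw [h0, hb, sub_mul, mul_add, mul_add, mul_smul_comm, smul_mul_assoc, smul_mul_assoc,
        mul_one, one_mul, mul_smul_comm, mul_one, smul_smul, hc, neg_smul]
      abel
    have hnb : ‖b‖ ^ 2 ≤ ‖a‖ ^ 2 + t ^ 2 := by
      have h2 : ‖b‖ * ‖b‖ = ‖star b * b‖ := (CStarRing.norm_star_mul_self).symm
      have h3 : ‖star b * b‖ ≤ ‖a * a‖ + ‖((t : ℂ) ^ 2) • (1 : A)‖ := hsb ▸ norm_add_le _ _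
      have h4 : ‖a * a‖ ≤ ‖a‖ * ‖a‖ := norm_mul_le _ _
      have h5 : ‖((t : ℂ) ^ 2) • (1 : A)‖ = t ^ 2 := by
        rw [norm_smul, norm_one, mul_one, ← Complex.ofReal_pow, Complex.norm_real]
        exact _root_.abs_of_nonneg (sq_nonneg t)
      nlinarith [norm_nonneg b]
    have hφb : φ b = φ a + (t : ℂ) * I := by
      simp [hb, map_add, map_smul, h1, smul_eq_mul]
    have hle : ‖φ b‖ ≤ ‖b‖ := by
      calc ‖φ b‖ ≤ ‖φ‖ * ‖b‖ := φ.le_opNorm b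
      _ ≤ 1 * ‖b‖ := by gcongr
      _ = ‖b‖ := one_mul _
    have hsq : ‖φ b‖ ^ 2 = (φ a).re ^ 2 + ((φ a).im + t) ^ 2 := by
      rw [hφb, Complex.sq_norm]
      simp [Complex.normSq_apply, Complex.add_re, Complex.add_im]
      ring
    nlinarith [norm_nonneg (φ b), norm_nonneg b]
  by_contra him
  have := key ((‖a‖ ^ 2 - (φ a).re ^ 2 - (φ a).im ^ 2 + 1) / (2 * (φ a).im))
  rw [mul_comm, ← mul_assoc, mul_comm ((φ a).im) 2, mul_div_cancel₀] at this
  · linarith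
  · exact mul_ne_zero two_ne_zero him

end aux

section more

variable {A : Type*} [CStarAlgebra A] [Nontrivial A]
variable (φ : A →L[ℂ] ℂ) (h1 : φ 1 = 1) (hn : ‖φ‖ ≤ 1)

include h1 hn

lemma aux_real {a : A} (ha : IsSelfAdjoint a) : φ a = ((φ a).re : ℂ) :=
  (Complex.re_add_im (φ a)) ▸ by rw [aux_im_eq_zero φ h1 hn ha]; simp

lemma aux_star_aux (s u : A) (hss : IsSelfAdjoint s) (hus : IsSelfAdjoint u) :
    φ (star (s + I • u)) = (starRingEnd ℂ) (φ (s + I • u)) := by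
  have hst : star (s + I • u) = s + (-I) • u := by
    rw [star_add, hss.star_eq, star_smul, hus.star_eq, Complex.star_def, Complex.conj_I]
  have hrs := aux_real φ h1 hn hss
  have hru := aux_real φ h1 hn hus
  rw [hst, map_add, map_add, map_smul, map_smul, smul_eq_mul, smul_eq_mul, hrs, hru]
  simp [Complex.ext_iff]

lemma aux_star (x : A) : φ (star x) = (starRingEnd ℂ) (φ x) := by
  have hss : IsSelfAdjoint ((2⁻¹ : ℂ) • (x + star x)) := by
    rw [IsSelfAdjoint, star_smul, star_add, star_star]
    simp [Complex.ext_iff, add_comm]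
  have hus : IsSelfAdjoint ((-(2⁻¹) * I : ℂ) • (x - star x)) := by
    rw [IsSelfAdjoint, star_smul, star_sub, star_star]
    have h2 : star (-(2⁻¹) * I : ℂ) = (2⁻¹ * I : ℂ) := by simp [Complex.ext_iff]
    rw [h2, ← neg_sub x (star x), smul_neg, ← neg_smul]
    ring_nf
  have hx : x = (2⁻¹ : ℂ) • (x + star x) + I • ((-(2⁻¹) * I : ℂ) • (x - star x)) := by
    rw [smul_smul]
    have h3 : (I * (-(2⁻¹) * I) : ℂ) = (2⁻¹ : ℂ) := by
      rw [mul_comm, mul_assoc, Complex.I_mul_I]; ring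
    rw [h3, smul_add, smul_sub]
    module
  conv_lhs => rw [hx]
  conv_rhs => rw [hx]
  exact aux_star_aux φ h1 hn _ _ hss hus

variable [PartialOrder A] [StarOrderedRing A]

lemma aux_nonneg {a : A} (ha : 0 ≤ a) : 0 ≤ (φ a).re := by
  have hsa : IsSelfAdjoint a := IsSelfAdjoint.of_nonneg ha
  set b : A := algebraMap ℝ A ‖a‖ - a with hb
  have hbsa : IsSelfAdjoint b :=
    (IsSelfAdjoint.algebraMap A (isSelfAdjoint_iff.mpr rfl)).sub hsa
  have hb0 : 0 ≤ b := sub_nonneg.mpr hsa.le_algebraMap_norm_self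
  have hble : b ≤ algebraMap ℝ A ‖a‖ := sub_le_self _ ha
  have hnb : ‖b‖ ≤ ‖a‖ := by
    calc ‖b‖ ≤ ‖algebraMap ℝ A ‖a‖‖ := CStarAlgebra.norm_le_norm_of_nonneg_of_le hb0 hble
    _ = ‖a‖ := by rw [norm_algebraMap', norm_norm]
  have hφalg : φ (algebraMap ℝ A ‖a‖) = (‖a‖ : ℂ) := by
    rw [Algebra.algebraMap_eq_smul_one, φ.map_smul_of_tower, h1]
    simp
  have hφb : φ b = (‖a‖ : ℂ) - φ a := by rw [hb, map_sub, hφalg]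
  have hle : ‖φ b‖ ≤ ‖a‖ := by
    calc ‖φ b‖ ≤ ‖φ‖ * ‖b‖ := φ.le_opNorm b
    _ ≤ 1 * ‖a‖ := by gcongr
    _ = ‖a‖ := one_mul _
  have hre : |(φ b).re| ≤ ‖a‖ := (Complex.abs_re_le_norm _).trans hle
  have : (φ b).re = ‖a‖ - (φ a).re := by rw [hφb]; simp
  rw [this] at hre
  rcases abs_le.mp hre with ⟨_, h2⟩
  linarith

lemma aux_cs (a b : A) :
    ‖φ (star a * b)‖ ^ 2 ≤ (φ (star a * a)).re * (φ (star b * b)).re := by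
  set α := (φ (star a * a)).re with hα
  set β := (φ (star b * b)).re with hβ
  set c := φ (star a * b) with hc
  have hα0 : 0 ≤ α := aux_nonneg φ h1 hn (star_mul_self_nonneg a)
  have hβ0 : 0 ≤ β := aux_nonneg φ h1 hn (star_mul_self_nonneg b)
  have hαr : φ (star a * a) = (α : ℂ) :=
    aux_real φ h1 hn (IsSelfAdjoint.star_mul_self a)
  have hβr : φ (star b * b) = (β : ℂ) :=
    aux_real φ h1 hn (IsSelfAdjoint.star_mul_self b)
  have hba : φ (star b * a) = (starRingEnd ℂ) c := by
    rw [hc, ← aux_star φ h1 hn (star a * b), star_mul, star_star]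
  have key : ∀ t : ℂ, 0 ≤ α + 2 * (t * c).re + Complex.normSq t * β := by
    intro t
    have hpos := aux_nonneg φ h1 hn (star_mul_self_nonneg (a + t • b))
    have hexp : φ (star (a + t • b) * (a + t • b)) =
        (α : ℂ) + (t * c + (starRingEnd ℂ) (t * c)) + ((Complex.normSq t : ℝ) : ℂ) * (β : ℂ) := by
      rw [star_add, star_smul, add_mul, mul_add, mul_add, smul_mul_assoc, smul_mul_assoc,
        mul_smul_comm, mul_smul_comm, smul_smul]
      rw [map_add, map_add, map_add, map_smul, map_smul, map_smul, smul_eq_mul, smul_eq_mul,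
        smul_eq_mul, hαr, hβr, hba]
      rw [Complex.star_def, map_mul (starRingEnd ℂ) t c, Complex.normSq_eq_conj_mul_self]
      ring
    rw [hexp] at hpos
    have hre : ((α : ℂ) + (t * c + (starRingEnd ℂ) (t * c))
        + ((Complex.normSq t : ℝ) : ℂ) * (β : ℂ)).re
        = α + 2 * (t * c).re + Complex.normSq t * β := by
      rw [Complex.add_conj]
      simp only [Complex.add_re, Complex.ofReal_re, Complex.mul_re, Complex.ofReal_im,
        Complex.ofReal_mul]
      ring
    rw [hre] at hpos
    exact hpos
  by_cases hc0 : c = 0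
  · rw [hc0]
    simpa using mul_nonneg hα0 hβ0
  have hnc : (0 : ℝ) < ‖c‖ := norm_pos_iff.mpr hc0
  have habs : ‖c‖ ≠ 0 := by exact hnc.ne'
  have key2 : ∀ s : ℝ, 0 ≤ α + 2 * s * ‖c‖ + s ^ 2 * β := by
    intro s
    have hk := key ((s : ℂ) * (starRingEnd ℂ) c / (‖c‖ : ℂ))
    have hcne : ((‖c‖ : ℝ) : ℂ) ≠ 0 := by exact_mod_cast hnc.ne'
    have h4 : ((s : ℂ) * (starRingEnd ℂ) c / (‖c‖ : ℂ) * c) = ((s * ‖c‖ : ℝ) : ℂ) := by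
      rw [div_mul_eq_mul_div, mul_assoc, ← Complex.normSq_eq_conj_mul_self,
        Complex.normSq_eq_norm_sq]
      push_cast
      rw [mul_div_assoc, pow_two, mul_div_cancel_right₀ _ hcne]
    have h5 : Complex.normSq ((s : ℂ) * (starRingEnd ℂ) c / (‖c‖ : ℂ)) = s ^ 2 := by
      rw [Complex.normSq_div, Complex.normSq_mul, Complex.normSq_conj, Complex.normSq_ofReal,
        Complex.normSq_ofReal, Complex.normSq_eq_norm_sq]
      field_simp
    rw [h4, h5] at hk
    simp only [Complex.ofReal_re] at hk
    linarith
  by_cases hβ0' : β = 0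
  · exfalso
    have hk2 := key2 (-(α + 1) / (2 * ‖c‖))
    rw [hβ0'] at hk2
    have h6 : 2 * (-(α + 1) / (2 * ‖c‖)) * ‖c‖ = -(α + 1) := by
      field_simp
    rw [h6] at hk2
    linarith
  · have hβpos : 0 < β := lt_of_le_of_ne hβ0 (Ne.symm hβ0')
    have hk3 := key2 (-‖c‖ / β)
    have h7 : α + 2 * (-‖c‖ / β) * ‖c‖ + (-‖c‖ / β) ^ 2 * β = α - ‖c‖ ^ 2 / β := by
      field_simp
      ring
    rw [h7] at hk3
    have h9 : ‖c‖ ^ 2 / β ≤ α := by linarith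
    exact (div_le_iff₀ hβpos).mp h9

end more

section key

variable {A : Type*} [CStarAlgebra A] [PartialOrder A] [StarOrderedRing A]

lemma aux_key (h x : A) (hh : IsSelfAdjoint h) (lam : ℝ) :
    ‖x‖ ≤ ‖x + (lam : ℂ) • (I • (h * x - x * h))‖ := by
  by_cases hx0 : x = 0
  · simp [hx0]
  haveI : Nontrivial A := nontrivial_of_ne x 0 hx0
  set b : A := x + (lam : ℂ) • (I • (h * x - x * h)) with hbdef
  set z : A := star x * x with hzdef
  have hz0 : 0 ≤ z := star_mul_self_nonneg x
  have hznorm : ‖z‖ = ‖x‖ * ‖x‖ := CStarRing.norm_star_mul_self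
  have hxpos : (0 : ℝ) < ‖x‖ := norm_pos_iff.mpr hx0
  have hzpos : (0 : ℝ) < ‖z‖ := by rw [hznorm]; positivity
  set v : A := algebraMap ℝ A ‖z‖ + z with hvdef
  have hvnorm : ‖v‖ = 2 * ‖z‖ := by
    have hle : ‖v‖ ≤ 2 * ‖z‖ := by
      calc ‖v‖ ≤ ‖algebraMap ℝ A ‖z‖‖ + ‖z‖ := norm_add_le _ _
      _ = 2 * ‖z‖ := by rw [norm_algebraMap', norm_norm]; ring
    have hge : 2 * ‖z‖ ≤ ‖v‖ := by
      have hmem : ‖z‖ ∈ spectrum ℝ z := CStarAlgebra.norm_mem_spectrum_of_nonneg hz0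
      have hmem2 : ‖z‖ + ‖z‖ ∈ spectrum ℝ v := spectrum.add_mem_add_iff.mpr hmem
      have := spectrum.norm_le_norm_of_mem hmem2
      rw [Real.norm_eq_abs, _root_.abs_of_nonneg (by positivity : (0:ℝ) ≤ ‖z‖ + ‖z‖)] at this
      linarith
    linarith
  have hvne : v ≠ 0 := by
    intro hv
    rw [hv, norm_zero] at hvnorm
    linarith
  obtain ⟨φ, hφn, hφv⟩ := exists_dual_vector ℂ v (norm_ne_zero_iff.mpr hvne)
  have hn' : ‖φ‖ ≤ 1 := le_of_eq hφn
  have hφalg : ∀ r : ℝ, φ (algebraMap ℝ A r) = (r : ℂ) * φ 1 := by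
    intro r
    rw [Algebra.algebraMap_eq_smul_one, φ.map_smul_of_tower]
    simp [Complex.real_smul]
  have hsum : (‖z‖ : ℂ) * φ 1 + φ z = 2 * ‖z‖ := by
    have : φ v = ((2 * ‖z‖ : ℝ) : ℂ) := by rw [← hvnorm]; exact_mod_cast hφv
    rw [hvdef, map_add, hφalg] at this
    rw [this]
    push_cast
    ring
  have hφ1_le : ‖φ 1‖ ≤ 1 := by
    calc ‖φ 1‖ ≤ ‖φ‖ * ‖(1 : A)‖ := φ.le_opNorm 1
    _ = 1 := by rw [hφn, norm_one, mul_one]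
  have hφz_le : ‖φ z‖ ≤ ‖z‖ := by
    calc ‖φ z‖ ≤ ‖φ‖ * ‖z‖ := φ.le_opNorm z
    _ = ‖z‖ := by rw [hφn, one_mul]
  have hre_sum : ‖z‖ * (φ 1).re + (φ z).re = 2 * ‖z‖ := by
    have := congrArg Complex.re hsum
    simpa [Complex.add_re, Complex.mul_re, Complex.ofReal_re, Complex.ofReal_im] using this
  have hre1_le : (φ 1).re ≤ 1 := (Complex.re_le_norm _).trans hφ1_le
  have hrez_le : (φ z).re ≤ ‖z‖ := (Complex.re_le_norm _).trans hφz_le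
  have hre1 : (φ 1).re = 1 := by nlinarith
  have hrez : (φ z).re = ‖z‖ := by nlinarith
  have h1 : φ 1 = 1 := by
    have him : (φ 1).im = 0 := by
      have h2 := Complex.sq_norm (φ 1)
      rw [Complex.normSq_apply, hre1] at h2
      have h3 : ‖φ 1‖ ≤ 1 := hφ1_le
      nlinarith [norm_nonneg (φ 1), sq_nonneg ((φ 1).im)]
    exact Complex.ext (by rw [hre1]; simp) (by rw [him]; simp)
  have hz1 : φ z = (‖z‖ : ℂ) := by
    have him : (φ z).im = 0 := by
      have h2 := Complex.sq_norm (φ z)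
      rw [Complex.normSq_apply, hrez] at h2
      have h3 : ‖φ z‖ ≤ ‖z‖ := hφz_le
      nlinarith [norm_nonneg (φ z), sq_nonneg ((φ z).im)]
    exact Complex.ext (by rw [hrez]; simp) (by rw [him]; simp)
  -- the positive part `w` with `φ w = 0`
  set w : A := algebraMap ℝ A ‖z‖ - z with hwdef
  have hw0 : 0 ≤ w :=
    sub_nonneg.mpr (IsSelfAdjoint.of_nonneg hz0).le_algebraMap_norm_self
  have hφw : φ w = 0 := by
    rw [hwdef, map_sub, hφalg, h1, hz1]
    ring
  set c : A := CFC.sqrt w with hcdef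
  have hcc : c * c = w := CFC.sqrt_mul_sqrt_self w hw0
  have hcsa : star c = c := (IsSelfAdjoint.of_nonneg (CFC.sqrt_nonneg (a := w))).star_eq
  have hwa : ∀ a : A, φ (w * a) = 0 := by
    intro a
    have hcs := aux_cs φ h1 hn' c (c * a)
    have e1 : star c * (c * a) = w * a := by rw [hcsa, ← mul_assoc, hcc]
    have e2 : star c * c = w := by rw [hcsa, hcc]
    rw [e1, e2, hφw] at hcs
    simp only [Complex.zero_re, zero_mul] at hcs
    have h6 : ‖φ (w * a)‖ ^ 2 = 0 := le_antisymm hcs (sq_nonneg _)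
    exact norm_eq_zero.mp (pow_eq_zero_iff (two_ne_zero) |>.mp h6)
  -- the key computation
  have hzh : φ (star x * (x * h)) = (‖z‖ : ℂ) * φ h := by
    have e3 : star x * (x * h) = algebraMap ℝ A ‖z‖ * h - w * h := by
      rw [hwdef, sub_mul, sub_sub_cancel, ← mul_assoc, hzdef]
    have e4 : φ (algebraMap ℝ A ‖z‖ * h) = (‖z‖ : ℂ) * φ h := by
      rw [Algebra.algebraMap_eq_smul_one, smul_mul_assoc, one_mul, φ.map_smul_of_tower]
      simp [Complex.real_smul]
    rw [e3, map_sub, e4, hwa]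
    ring
  set d : ℂ := φ (star x * (h * x)) - (‖z‖ : ℂ) * φ h with hddef
  have hd_im : d.im = 0 := by
    have hsa1 : IsSelfAdjoint (star x * (h * x)) := by
      rw [IsSelfAdjoint, star_mul, star_mul, star_star, hh.star_eq, mul_assoc]
    have hr1 := aux_im_eq_zero φ h1 hn' hsa1
    have hr2 := aux_im_eq_zero φ h1 hn' hh
    rw [hddef]
    simp [Complex.sub_im, Complex.mul_im, Complex.ofReal_im, Complex.ofReal_re, hr1, hr2]
  have hφb : φ (star x * b) = (‖z‖ : ℂ) + (lam : ℂ) * I * d := by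
    have e5 : star x * b = z + (lam : ℂ) • (I • (star x * (h * x) - star x * (x * h))) := by
      rw [hbdef, mul_add, mul_smul_comm, mul_smul_comm, mul_sub, ← hzdef, ← mul_assoc,
        ← mul_assoc, mul_assoc (star x) h x, mul_assoc (star x) x h]
    rw [e5, map_add, map_smul, map_smul, map_sub, hzh, hz1, hddef]
    simp only [smul_eq_mul]
    ring
  have hre_b : (φ (star x * b)).re = ‖z‖ := by
    rw [hφb]
    simp [Complex.add_re, Complex.mul_re, Complex.mul_im, hd_im]
  have hcs2 := aux_cs φ h1 hn' x b
  rw [← hzdef, hrez] at hcs2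
  have hb_re : (φ (star b * b)).re ≤ ‖b‖ * ‖b‖ := by
    calc (φ (star b * b)).re ≤ ‖φ (star b * b)‖ := Complex.re_le_norm _
    _ ≤ ‖φ‖ * ‖star b * b‖ := φ.le_opNorm _
    _ ≤ 1 * (‖b‖ * ‖b‖) := by
        rw [CStarRing.norm_star_mul_self]
        gcongr
    _ = ‖b‖ * ‖b‖ := one_mul _
  have hlow : ‖z‖ ≤ ‖φ (star x * b)‖ := hre_b ▸ Complex.re_le_norm _
  have hfinal : ‖z‖ ^ 2 ≤ ‖z‖ * (‖b‖ * ‖b‖) := by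
    calc ‖z‖ ^ 2 ≤ ‖φ (star x * b)‖ ^ 2 := pow_le_pow_left₀ (le_of_lt hzpos) hlow 2
    _ ≤ ‖z‖ * (φ (star b * b)).re := hcs2
    _ ≤ ‖z‖ * (‖b‖ * ‖b‖) := mul_le_mul_of_nonneg_left hb_re (le_of_lt hzpos)
  rw [hznorm] at hfinal
  have hzz : (0 : ℝ) < ‖x‖ * ‖x‖ := by positivity
  have h10 : ‖x‖ * ‖x‖ ≤ ‖b‖ * ‖b‖ := by
    refine le_of_mul_le_mul_left ?_ hzz
    calc (‖x‖ * ‖x‖) * (‖x‖ * ‖x‖) = (‖x‖ * ‖x‖) ^ 2 := by ring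
    _ ≤ (‖x‖ * ‖x‖) * (‖b‖ * ‖b‖) := hfinal
  exact nonneg_le_nonneg_of_sq_le_sq (norm_nonneg b) h10

end key

/-- The graph limit of the inner derivations `ad(i h_n)`. -/
def graphLimit {A : Type*} [CStarAlgebra A] (h : ℕ → A) : Set (A × A) :=
  {p | ∃ x : ℕ → A, Tendsto x atTop (nhds p.1) ∧
    Tendsto (fun n => Complex.I • (h n * x n - x n * h n)) atTop (nhds p.2)}

/-- If `δ` is the graph limit of `ad(i h_n)` (with dense domain), then
`‖x + λ δ(x)‖ ≥ ‖x‖` for every `x` in its domain and every real `λ`. -/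
theorem stmt_9 {A : Type*} [CStarAlgebra A] (h : ℕ → A)
    (hsa : ∀ n, IsSelfAdjoint (h n))
    (hD : Dense {x : A | ∃ y : A, (x, y) ∈ graphLimit h})
    (x y : A) (hxy : (x, y) ∈ graphLimit h) (lam : ℝ) :
    ‖x‖ ≤ ‖x + (lam : ℂ) • y‖ := by
  letI : PartialOrder A := CStarAlgebra.spectralOrder A
  letI : StarOrderedRing A := CStarAlgebra.spectralOrderedRing A
  obtain ⟨xs, hx1, hx2⟩ := hxy
  have hkey : ∀ n, ‖xs n‖ ≤
      ‖xs n + (lam : ℂ) • (Complex.I • (h n * xs n - xs n * h n))‖ :=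
    fun n => aux_key (h n) (xs n) (hsa n) lam
  have t1 : Tendsto (fun n => ‖xs n‖) atTop (nhds ‖x‖) := hx1.norm
  have t2 : Tendsto
      (fun n => ‖xs n + (lam : ℂ) • (Complex.I • (h n * xs n - xs n * h n))‖)
      atTop (nhds ‖x + (lam : ℂ) • y‖) := (hx1.add (hx2.const_smul _)).norm
  exact le_of_tendsto_of_tendsto' t1 t2 hkey
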